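/- Let G be a connected graph on vertex set {1,...,n} with n ≥ 2, Φ = (F_1,...,F_n) with |V(F_i)| ≥ 2 for all i, and let D be a minimum dominating set of G[Φ]. If |D ∩ V(F_i)| = 2 and |D ∩ V(F_j)| = 2 with i ≠ j, then the distance in G[Φ] between any vertex of F_i and any vertex of F_j is at least 3. -/

import Mathlib

open scoped Classical

/-- A dominating set: every vertex is in `D` or adjacent to a vertex of `D`. -/
def isDominatingSet {V : Type*} (H : SimpleGraph V) (D : Finset V) : Prop :=
  ∀ v : V, v ∈ D ∨ ∃ u ∈ D, H.Adj u v

/-- A total dominating set: every vertex has a neighbor in `D`. -/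
def isTotalDominatingSet {V : Type*} (H : SimpleGraph V) (D : Finset V) : Prop :=
  ∀ v : V, ∃ u ∈ D, H.Adj u v

def isMinimalDominatingSet {V : Type*} (H : SimpleGraph V) (D : Finset V) : Prop :=
  isDominatingSet H D ∧ ∀ D' : Finset V, D' ⊂ D → ¬ isDominatingSet H D'

def isMinimalTotalDominatingSet {V : Type*} (H : SimpleGraph V) (D : Finset V) : Prop :=
  isTotalDominatingSet H D ∧ ∀ D' : Finset V, D' ⊂ D → ¬ isTotalDominatingSet H D'

noncomputable def domNum {V : Type*} (H : SimpleGraph V) : ℕ :=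
  sInf {k | ∃ D : Finset V, isDominatingSet H D ∧ D.card = k}

noncomputable def totalDomNum {V : Type*} (H : SimpleGraph V) : ℕ :=
  sInf {k | ∃ D : Finset V, isTotalDominatingSet H D ∧ D.card = k}

noncomputable def upperDomNum {V : Type*} (H : SimpleGraph V) : ℕ :=
  sSup {k | ∃ D : Finset V, isMinimalDominatingSet H D ∧ D.card = k}

noncomputable def upperTotalDomNum {V : Type*} (H : SimpleGraph V) : ℕ :=
  sSup {k | ∃ D : Finset V, isMinimalTotalDominatingSet H D ∧ D.card = k}

/-- Well (γ-)dominated: all minimal dominating sets have the same size. -/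
def WellDominated {V : Type*} (H : SimpleGraph V) : Prop :=
  ∀ D₁ D₂ : Finset V, isMinimalDominatingSet H D₁ → isMinimalDominatingSet H D₂ →
    D₁.card = D₂.card

/-- Well γ_t-dominated: all minimal total dominating sets have the same size. -/
def WellTotalDominated {V : Type*} (H : SimpleGraph V) : Prop :=
  ∀ D₁ D₂ : Finset V, isMinimalTotalDominatingSet H D₁ → isMinimalTotalDominatingSet H D₂ →
    D₁.card = D₂.card

/-- Restrained dominating set: dominating and every vertex outside `D` has a
neighbor outside `D`. -/
def isRestrainedDominatingSet {V : Type*} (H : SimpleGraph V) (D : Finset V) : Prop :=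
  isDominatingSet H D ∧ ∀ v ∉ D, ∃ u ∉ D, H.Adj u v

/-- Outer-connected dominating set: dominating and the subgraph induced by the
complement of `D` is connected. -/
def isOuterConnectedDominatingSet {V : Type*} (H : SimpleGraph V) (D : Finset V) : Prop :=
  isDominatingSet H D ∧ (H.induce ((↑D : Set V)ᶜ)).Connected

def isTotalRestrainedDominatingSet {V : Type*} (H : SimpleGraph V) (D : Finset V) : Prop :=
  isTotalDominatingSet H D ∧ ∀ v ∉ D, ∃ u ∉ D, H.Adj u v

def isTotalOuterConnectedDominatingSet {V : Type*} (H : SimpleGraph V) (D : Finset V) : Prop :=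
  isTotalDominatingSet H D ∧ (H.induce ((↑D : Set V)ᶜ)).Connected

noncomputable def restrainedDomNum {V : Type*} (H : SimpleGraph V) : ℕ :=
  sInf {k | ∃ D : Finset V, isRestrainedDominatingSet H D ∧ D.card = k}

noncomputable def ocDomNum {V : Type*} (H : SimpleGraph V) : ℕ :=
  sInf {k | ∃ D : Finset V, isOuterConnectedDominatingSet H D ∧ D.card = k}

noncomputable def totalRestrainedDomNum {V : Type*} (H : SimpleGraph V) : ℕ :=
  sInf {k | ∃ D : Finset V, isTotalRestrainedDominatingSet H D ∧ D.card = k}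

noncomputable def totalOcDomNum {V : Type*} (H : SimpleGraph V) : ℕ :=
  sInf {k | ∃ D : Finset V, isTotalOuterConnectedDominatingSet H D ∧ D.card = k}

/-- Paired dominating set: dominating and the induced subgraph on `D` has a
perfect matching. -/
def isPairedDominatingSet {V : Type*} (H : SimpleGraph V) (D : Finset V) : Prop :=
  isDominatingSet H D ∧
    ∃ M : SimpleGraph.Subgraph (H.induce (↑D : Set V)), M.IsPerfectMatching

noncomputable def pairedDomNum {V : Type*} (H : SimpleGraph V) : ℕ :=
  sInf {k | ∃ D : Finset V, isPairedDominatingSet H D ∧ D.card = k}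

def isIndependentSet {V : Type*} (H : SimpleGraph V) (D : Finset V) : Prop :=
  ∀ u ∈ D, ∀ v ∈ D, ¬ H.Adj u v

def isMaximalIndependentSet {V : Type*} (H : SimpleGraph V) (D : Finset V) : Prop :=
  isIndependentSet H D ∧ ∀ D' : Finset V, D ⊂ D' → ¬ isIndependentSet H D'

/-- The independent domination number `i(H)`. -/
noncomputable def indepDomNum {V : Type*} (H : SimpleGraph V) : ℕ :=
  sInf {k | ∃ D : Finset V, isMaximalIndependentSet H D ∧ D.card = k}

/-- The independence number `β₀(H)`. -/
noncomputable def indepNum {V : Type*} (H : SimpleGraph V) : ℕ :=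
  sSup {k | ∃ D : Finset V, isIndependentSet H D ∧ D.card = k}

/-- An efficient dominating set: every vertex is dominated by exactly one
member of `D`. -/
def isEfficientDominatingSet {V : Type*} (H : SimpleGraph V) (D : Finset V) : Prop :=
  ∀ v : V, ∃! u : V, u ∈ D ∧ (u = v ∨ H.Adj u v)

/-- The generalized lexicographic product `G[Φ]` of a graph `G` on `Fin n` and a
family `Φ = (F 0, …, F (n-1))` of pairwise disjoint graphs: the `F i` are induced
subgraphs, and vertices in distinct `F i`, `F j` are adjacent iff `i j ∈ E(G)`. -/
def GLP {n : ℕ} (G : SimpleGraph (Fin n)) {V : Fin n → Type*}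
    (F : ∀ i, SimpleGraph (V i)) : SimpleGraph (Σ i, V i) where
  Adj x y := (x.1 ≠ y.1 ∧ G.Adj x.1 y.1) ∨ ∃ h : x.1 = y.1, (F y.1).Adj (h ▸ x.2) y.2
  symm := by
    constructor
    rintro ⟨i, a⟩ ⟨j, b⟩ (⟨hne, hadj⟩ | ⟨h, hadj⟩)
    · exact Or.inl ⟨fun hh => hne hh.symm, hadj.symm⟩
    · dsimp only at h
      subst h
      exact Or.inr ⟨rfl, hadj.symm⟩
  loopless := by
    constructor
    rintro ⟨i, a⟩ (⟨hne, _⟩ | ⟨h, hadj⟩)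
    · exact hne rfl
    · exact (F i).loopless.irrefl a hadj

/-- The number of vertices of `D ∩ V(F i)`. -/
noncomputable def layerCount {n : ℕ} {V : Fin n → Type*} [∀ i, Fintype (V i)]
    (D : Finset (Σ i, V i)) (i : Fin n) : ℕ :=
  (D.filter (fun x => x.1 = i)).card

-- aux lemmas
lemma notMinAux {W : Type*} {H : SimpleGraph W} {D D' : Finset W}
    (hmin : D.card = domNum H)
    (hD' : isDominatingSet H D') (hlt : D'.card < D.card) : False := by
  have h1 : domNum H ≤ D'.card := Nat.sInf_le ⟨D', hD', rfl⟩
  omega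

lemma glp_reach_same {n : ℕ} (hn : 2 ≤ n) {G : SimpleGraph (Fin n)} (hG : G.Connected)
    {V : Fin n → Type} (F : ∀ i, SimpleGraph (V i)) (hV : ∀ i, Nonempty (V i))
    (i : Fin n) (a b : V i) : (GLP G F).Reachable ⟨i, a⟩ ⟨i, b⟩ := by
  by_cases hab : a = b
  · subst hab; exact SimpleGraph.Reachable.refl _
  · have hnt : Nontrivial (Fin n) := Fin.nontrivial_iff_two_le.mpr hn
    obtain ⟨j', hj'⟩ := exists_ne i
    obtain ⟨k, hk⟩ : ∃ k, G.Adj i k := by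
      have hr := hG.preconnected i j'
      refine hr.elim fun w => ?_
      cases w with
      | nil => exact absurd rfl (Ne.symm hj')
      | cons h _ => exact ⟨_, h⟩
    obtain ⟨c⟩ := hV k
    have h1 : (GLP G F).Adj ⟨i, a⟩ ⟨k, c⟩ := Or.inl ⟨hk.ne, hk⟩
    have h2 : (GLP G F).Adj ⟨k, c⟩ ⟨i, b⟩ := Or.inl ⟨hk.ne', hk.symm⟩
    exact h1.reachable.trans h2.reachable

lemma glp_reachable {n : ℕ} (hn : 2 ≤ n) {G : SimpleGraph (Fin n)} (hG : G.Connected)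
    {V : Fin n → Type} (F : ∀ i, SimpleGraph (V i)) (hV : ∀ i, Nonempty (V i))
    {i j : Fin n} (p : G.Walk i j) (a : V i) (b : V j) :
    (GLP G F).Reachable ⟨i, a⟩ ⟨j, b⟩ := by
  induction p with
  | nil => exact glp_reach_same hn hG F hV _ a b
  | cons h _ ih =>
    obtain ⟨c⟩ := hV _
    exact (SimpleGraph.Adj.reachable (Or.inl ⟨h.ne, h⟩)).trans (ih c b)

lemma walk_two {n : ℕ} {G : SimpleGraph (Fin n)} {V : Fin n → Type}
    {F : ∀ i, SimpleGraph (V i)} {i j : Fin n} (hij : i ≠ j) {a : V i} {b : V j}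
    (p : (GLP G F).Walk ⟨i, a⟩ ⟨j, b⟩) (hp : p.length ≤ 2) :
    G.Adj i j ∨ ∃ k, k ≠ i ∧ k ≠ j ∧ G.Adj i k ∧ G.Adj k j := by
  cases p with
  | nil => exact absurd rfl hij
  | cons h1 q =>
    cases q with
    | nil =>
      rcases h1 with ⟨_, hg⟩ | ⟨he, _⟩
      · exact Or.inl hg
      · exact absurd he hij
    | cons h2 r =>
      cases r with
      | nil =>
        rename_i w
        obtain ⟨k, c⟩ := w
        rcases h1 with ⟨hne1, hg1⟩ | ⟨he1, -⟩
        · rcases h2 with ⟨hne2, hg2⟩ | ⟨he2, -⟩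
          · have hg1' : G.Adj i k := hg1
            have hg2' : G.Adj k j := hg2
            by_cases hki : k = i
            · subst hki; exact Or.inl hg2'
            · by_cases hkj : k = j
              · subst hkj; exact Or.inl hg1'
              · exact Or.inr ⟨k, hki, hkj, hg1', hg2'⟩
          · have he2' : k = j := he2
            subst he2'
            exact Or.inl hg1
        · have he1' : i = k := he1
          subst he1'
          rcases h2 with ⟨_, hg2⟩ | ⟨he2, -⟩
          · exact Or.inl hg2
          · exact absurd he2 hij
      | cons _ _ => simp [SimpleGraph.Walk.length_cons] at hp
/-- If `D` is a minimum dominating set of `G[Φ]` with `|D ∩ V(F i)| = 2` and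
`|D ∩ V(F j)| = 2` for `i ≠ j`, then vertices of `F i` and `F j` are at
distance at least 3 in `G[Φ]`. -/
theorem stmt_8 {n : ℕ} (hn : 2 ≤ n) (G : SimpleGraph (Fin n)) (hG : G.Connected)
    (V : Fin n → Type) [∀ i, Fintype (V i)] (F : ∀ i, SimpleGraph (V i))
    (hV : ∀ i, 2 ≤ Fintype.card (V i)) (D : Finset (Σ i, V i))
    (hD : isDominatingSet (GLP G F) D) (hDmin : D.card = domNum (GLP G F))
    (i j : Fin n) (hij : i ≠ j)
    (hi : layerCount D i = 2) (hj : layerCount D j = 2) :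
    ∀ (a : V i) (b : V j), 3 ≤ (GLP G F).dist ⟨i, a⟩ ⟨j, b⟩ := by
  intro a b
  by_contra hlt
  push_neg at hlt
  have hNE : ∀ k, Nonempty (V k) := fun k =>
    Fintype.card_pos_iff.mp (by have := hV k; omega)
  have hreach : (GLP G F).Reachable ⟨i, a⟩ ⟨j, b⟩ :=
    (hG.preconnected i j).elim fun p => glp_reachable hn hG F hNE p a b
  obtain ⟨p, hp⟩ := hreach.exists_walk_length_eq_dist
  have hcase := walk_two hij p (by omega)
  -- extract the two elements of each layer
  unfold layerCount at hi hj
  obtain ⟨x1, x2, hx12, hxeq⟩ := Finset.card_eq_two.mp hi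
  obtain ⟨y1, y2, hy12, hyeq⟩ := Finset.card_eq_two.mp hj
  have hx1m : x1 ∈ D.filter (fun x => x.1 = i) := by
    rw [hxeq]; exact Finset.mem_insert_self _ _
  have hx2m : x2 ∈ D.filter (fun x => x.1 = i) := by
    rw [hxeq]; exact Finset.mem_insert_of_mem (Finset.mem_singleton_self _)
  have hy1m : y1 ∈ D.filter (fun x => x.1 = j) := by
    rw [hyeq]; exact Finset.mem_insert_self _ _
  have hy2m : y2 ∈ D.filter (fun x => x.1 = j) := by
    rw [hyeq]; exact Finset.mem_insert_of_mem (Finset.mem_singleton_self _)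
  obtain ⟨hx1D, hx1f⟩ := Finset.mem_filter.mp hx1m
  obtain ⟨hx2D, hx2f⟩ := Finset.mem_filter.mp hx2m
  obtain ⟨hy1D, hy1f⟩ := Finset.mem_filter.mp hy1m
  obtain ⟨hy2D, hy2f⟩ := Finset.mem_filter.mp hy2m
  have hx1y1 : x1 ≠ y1 := fun h => hij (by rw [← hx1f, h, hy1f])
  have hx2y1 : x2 ≠ y1 := fun h => hij (by rw [← hx2f, h, hy1f])
  rcases hcase with hGij | ⟨k, hki, hkj, hGik, hGkj⟩
  · -- i adjacent to j : erase y1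
    have hdom : isDominatingSet (GLP G F) (D.erase y1) := by
      intro v
      by_cases hvj : v.1 = j
      · refine Or.inr ⟨x1, Finset.mem_erase.mpr ⟨hx1y1, hx1D⟩, Or.inl ⟨?_, ?_⟩⟩
        · rw [hx1f, hvj]; exact hij
        · rw [hx1f, hvj]; exact hGij
      · rcases hD v with hv | ⟨w, hwD, hw⟩
        · exact Or.inl (Finset.mem_erase.mpr ⟨fun h => hvj (by rw [h, hy1f]), hv⟩)
        · by_cases hwy : w = y1
          · subst hwy
            rcases hw with ⟨hne, hg⟩ | ⟨heq, -⟩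
            · refine Or.inr ⟨y2, Finset.mem_erase.mpr ⟨hy12.symm, hy2D⟩, Or.inl ⟨?_, ?_⟩⟩
              · rw [hy2f]; exact fun h => hvj h.symm
              · rw [hy2f]; rw [hy1f] at hg; exact hg
            · exact absurd (by rw [← heq, hy1f]) hvj
          · exact Or.inr ⟨w, Finset.mem_erase.mpr ⟨hwy, hwD⟩, hw⟩
    exact notMinAux hDmin hdom (Finset.card_erase_lt_of_mem hy1D)
  · -- common neighbor layer k
    obtain ⟨c⟩ := hNE k
    set D' : Finset (Σ i, V i) := insert ⟨k, c⟩ ((D.erase x1).erase y1) with hD'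
    have hy1e : y1 ∈ D.erase x1 := Finset.mem_erase.mpr ⟨fun h => hx1y1 h.symm, hy1D⟩
    have hcard2 : 2 ≤ D.card := Finset.one_lt_card.mpr ⟨x1, hx1D, y1, hy1D, hx1y1⟩
    have hcard : D'.card < D.card := by
      have h1 : ((D.erase x1).erase y1).card = D.card - 1 - 1 := by
        rw [Finset.card_erase_of_mem hy1e, Finset.card_erase_of_mem hx1D]
      have h2 := Finset.card_insert_le (⟨k, c⟩ : Σ i, V i) ((D.erase x1).erase y1)
      rw [← hD'] at h2
      omega
    have hdom : isDominatingSet (GLP G F) D' := by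
      intro v
      by_cases hvi : v.1 = i
      · refine Or.inr ⟨⟨k, c⟩, Finset.mem_insert_self _ _, Or.inl ⟨?_, ?_⟩⟩
        · show k ≠ v.1; rw [hvi]; exact hki
        · show G.Adj k v.1; rw [hvi]; exact hGik.symm
      · by_cases hvj : v.1 = j
        · refine Or.inr ⟨⟨k, c⟩, Finset.mem_insert_self _ _, Or.inl ⟨?_, ?_⟩⟩
          · show k ≠ v.1; rw [hvj]; exact hkj
          · show G.Adj k v.1; rw [hvj]; exact hGkj
        · rcases hD v with hv | ⟨w, hwD, hw⟩
          · exact Or.inl (Finset.mem_insert_of_mem (Finset.mem_erase.mpr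
              ⟨fun h => hvj (by rw [h, hy1f]),
               Finset.mem_erase.mpr ⟨fun h => hvi (by rw [h, hx1f]), hv⟩⟩))
          · by_cases hwx : w = x1
            · subst hwx
              rcases hw with ⟨hne, hg⟩ | ⟨heq, -⟩
              · refine Or.inr ⟨x2, Finset.mem_insert_of_mem (Finset.mem_erase.mpr
                  ⟨hx2y1, Finset.mem_erase.mpr ⟨fun h => hx12 h.symm, hx2D⟩⟩),
                  Or.inl ⟨?_, ?_⟩⟩
                · rw [hx2f]; exact fun h => hvi h.symm
                · rw [hx2f]; rw [hx1f] at hg; exact hg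
              · exact absurd (by rw [← heq, hx1f]) hvi
            · by_cases hwy : w = y1
              · subst hwy
                rcases hw with ⟨hne, hg⟩ | ⟨heq, -⟩
                · refine Or.inr ⟨y2, Finset.mem_insert_of_mem (Finset.mem_erase.mpr
                    ⟨hy12.symm, Finset.mem_erase.mpr ⟨fun h => hij (by rw [← hy2f, h, hx1f]) |>.elim, hy2D⟩⟩),
                    Or.inl ⟨?_, ?_⟩⟩
                  · rw [hy2f]; exact fun h => hvj h.symm
                  · rw [hy2f]; rw [hy1f] at hg; exact hg
                · exact absurd (by rw [← heq, hy1f]) hvj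
              · exact Or.inr ⟨w, Finset.mem_insert_of_mem (Finset.mem_erase.mpr
                  ⟨hwy, Finset.mem_erase.mpr ⟨hwx, hwD⟩⟩), hw⟩
    exact notMinAux hDmin hdom hcard
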